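/- In the Clifford Hayden–Preskill protocol with local Pauli-Z measurements on D and \overline{D}, the probability of obtaining outcome strings m ∈ F_2^{n_D} on D and \overline{m} ∈ F_2^{n_D} on \overline{D} is (1/d_D)·(1/d_A^2)·N_s, where s = m + \overline{m} (mod 2) and N_s is the number of Pauli operators P_A with Λ_Z(P_A) = s. -/

import Mathlib

open Matrix Kronecker BigOperators

/-- The `n`-qubit Pauli operator `X^x Z^z` (symplectic representation). -/
noncomputable def pauli {n : ℕ} (x z : Fin n → ZMod 2) :
    Matrix (Fin n → ZMod 2) (Fin n → ZMod 2) ℂ :=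
  fun j k => if j = k + x then ((-1 : ℂ)) ^ (∑ i, (z i * k i).val) else 0

/-- The single-qubit `Z` operator on qubit `j` of an `n`-qubit system. -/
noncomputable def zOp {n : ℕ} (j : Fin n) :
    Matrix (Fin n → ZMod 2) (Fin n → ZMod 2) ℂ :=
  pauli 0 (Pi.single j 1)

/-- The Yoshida–Kitaev doubled Hayden–Preskill state, registers
`(R,(C,D),(D̄,C̄),R̄)`. -/
noncomputable def psiYK (nA nB nC nD : ℕ)
    (U : Matrix ((Fin nC → ZMod 2) × (Fin nD → ZMod 2))
      ((Fin nA → ZMod 2) × (Fin nB → ZMod 2)) ℂ)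
    (r : Fin nA → ZMod 2) (cd : (Fin nC → ZMod 2) × (Fin nD → ZMod 2))
    (dc : (Fin nD → ZMod 2) × (Fin nC → ZMod 2)) (rb : Fin nA → ZMod 2) : ℂ :=
  ((2 ^ nA : ℂ) * (Real.sqrt (2 ^ nB) : ℂ))⁻¹ *
    ∑ b : Fin nB → ZMod 2,
      U cd (r, b) * (starRingEnd ℂ) (U (dc.2, dc.1) (rb, b))

noncomputable def sgn (a : ZMod 2) : ℂ := (-1) ^ a.val

lemma zmod2_val : ZMod.val (0 : ZMod 2) = 0 ∧ ZMod.val (1 : ZMod 2) = 1 ∧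
    ZMod.val (2 : ZMod 2) = 0 ∧ (1 : ZMod 2) + 1 = 0 := by decide

lemma sgn_add (a b : ZMod 2) : sgn (a + b) = sgn a * sgn b := by
  rcases (show ∀ a : ZMod 2, a = 0 ∨ a = 1 by decide) a with rfl | rfl <;>
  rcases (show ∀ a : ZMod 2, a = 0 ∨ a = 1 by decide) b with rfl | rfl <;>
    norm_num [sgn, zmod2_val.1, zmod2_val.2.1, zmod2_val.2.2.1, zmod2_val.2.2.2]

lemma sgn_mul_self (a : ZMod 2) : sgn a * sgn a = 1 := by
  fin_cases a <;> norm_num [sgn, zmod2_val.1, zmod2_val.2.1, ZMod.val]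

lemma conj_sgn (a : ZMod 2) : (starRingEnd ℂ) (sgn a) = sgn a := by
  simp [sgn, map_pow]

noncomputable def chi {n : ℕ} (z k : Fin n → ZMod 2) : ℂ := ∏ i, sgn (z i * k i)

lemma pauli_apply {n : ℕ} (x z j k : Fin n → ZMod 2) :
    pauli x z j k = if j = k + x then chi z k else 0 := by
  rw [pauli, chi]
  congr 1
  rw [← Finset.prod_pow_eq_pow_sum]
  rfl

lemma conj_chi {n : ℕ} (z k : Fin n → ZMod 2) : (starRingEnd ℂ) (chi z k) = chi z k := by
  rw [chi, map_prod]; simp [conj_sgn]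

lemma chi_mul_self {n : ℕ} (z k : Fin n → ZMod 2) : chi z k * chi z k = 1 := by
  rw [chi, ← Finset.prod_mul_distrib]
  simp [sgn_mul_self]

lemma chi_add_right {n : ℕ} (z k k' : Fin n → ZMod 2) :
    chi z (k + k') = chi z k * chi z k' := by
  rw [chi, chi, chi, ← Finset.prod_mul_distrib]
  refine Finset.prod_congr rfl fun i _ => ?_
  rw [Pi.add_apply, mul_add, sgn_add]

lemma chi_add_left {n : ℕ} (z z' k : Fin n → ZMod 2) :
    chi (z + z') k = chi z k * chi z' k := by
  rw [chi, chi, chi, ← Finset.prod_mul_distrib]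
  refine Finset.prod_congr rfl fun i _ => ?_
  rw [Pi.add_apply, add_mul, sgn_add]

lemma sum_zmod2 (f : ZMod 2 → ℂ) : ∑ a : ZMod 2, f a = f 0 + f 1 := by
  rw [show (Finset.univ : Finset (ZMod 2)) = {0, 1} from by decide]
  simp

lemma sum_chi {n : ℕ} (k : Fin n → ZMod 2) :
    ∑ z : Fin n → ZMod 2, chi z k = if k = 0 then (2 : ℂ) ^ n else 0 := by
  unfold chi
  rw [← Fintype.prod_sum (fun i (a : ZMod 2) => sgn (a * k i))]
  have h : ∀ i, (∑ a : ZMod 2, sgn (a * k i)) = if k i = 0 then 2 else 0 := by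
    intro i
    rw [sum_zmod2]
    by_cases h : k i = 0
    · norm_num [h, sgn, zmod2_val.1]
    · have : k i = 1 := by
        have := (show ∀ a : ZMod 2, a ≠ 0 → a = 1 from by decide) (k i) h
        exact this
      norm_num [this, sgn, zmod2_val.1, zmod2_val.2.1]
  simp_rw [h]
  by_cases hk : k = 0
  · simp [hk, Finset.prod_const, Finset.card_univ]
  · obtain ⟨i, hi⟩ : ∃ i, k i ≠ 0 := by
      by_contra h'; push_neg at h'; exact hk (funext h')
    rw [if_neg hk]
    exact Finset.prod_eq_zero (Finset.mem_univ i) (by simp [hi])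

-- PART 2
lemma sgn_zero : sgn 0 = 1 := by norm_num [sgn, zmod2_val.1]

lemma sgn_eq_one_iff (a : ZMod 2) : sgn a = 1 ↔ a = 0 := by
  rcases (show ∀ a : ZMod 2, a = 0 ∨ a = 1 by decide) a with rfl | rfl <;> norm_num [sgn, zmod2_val.1, zmod2_val.2.1]

lemma chi_zero_right {n : ℕ} (z : Fin n → ZMod 2) : chi z 0 = 1 := by
  simp [chi, sgn_zero]

lemma chi_zero_left {n : ℕ} (k : Fin n → ZMod 2) : chi 0 k = 1 := by
  simp [chi, sgn_zero]

lemma chi_single {n : ℕ} (j : Fin n) (b : Fin n → ZMod 2) :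
    chi (Pi.single j 1) b = sgn (b j) := by
  rw [chi, Finset.prod_eq_single j (fun i _ hij => by
    simp [Pi.single_apply, hij, sgn_zero]) (by simp)]
  simp

lemma zOp_apply {n : ℕ} (j : Fin n) (a b : Fin n → ZMod 2) :
    zOp j a b = if a = b then sgn (b j) else 0 := by
  rw [zOp, pauli_apply, add_zero, chi_single]

lemma pi_add_add_self {n : ℕ} (a x : Fin n → ZMod 2) : a + x + x = a := by
  funext i
  simp [CharTwo.add_self_eq_zero, add_assoc]

lemma pi_eq_add_iff {n : ℕ} (a b x : Fin n → ZMod 2) : a = b + x ↔ b = a + x := by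
  constructor <;> rintro rfl <;> rw [pi_add_add_self]

lemma pauli_mul_conjTranspose_self {n : ℕ} (x z : Fin n → ZMod 2) :
    pauli x z * (pauli x z)ᴴ = 1 := by
  ext j k
  rw [Matrix.mul_apply, Matrix.one_apply]
  simp only [Matrix.conjTranspose_apply, pauli_apply]
  rw [Finset.sum_eq_single (j + x) (fun l _ hl => by
    rw [if_neg (fun h => hl ((pi_eq_add_iff _ _ _).mp h)), zero_mul]) (by simp)]
  rw [pi_add_add_self]
  by_cases hjk : j = k
  · subst hjk
    rw [if_pos rfl, if_pos rfl, RCLike.star_def, conj_chi, chi_mul_self]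
  · rw [if_pos rfl, if_neg (show ¬ k = j from fun h => hjk h.symm), star_zero, mul_zero,
      if_neg hjk]

-- PART 3
lemma zmod2_eq_of_add_eq_zero : ∀ a b : ZMod 2, a + b = 0 → a = b := by decide

lemma comm_extract {n : ℕ} (x z : Fin n → ZMod 2) (j : Fin n) (t : ZMod 2)
    (h : pauli x z * zOp j = ((-1 : ℂ)) ^ t.val • (zOp j * pauli x z)) : t = x j := by
  have h1 := Matrix.ext_iff.mpr h x 0
  simp only [Matrix.smul_apply, Matrix.mul_apply, smul_eq_mul] at h1
  have hL : (∑ l, pauli x z x l * zOp j l 0) = 1 := by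
    rw [Finset.sum_eq_single 0 (fun l _ hl => by rw [zOp_apply, if_neg hl, mul_zero])
      (by simp)]
    rw [zOp_apply, if_pos rfl, pauli_apply, if_pos (zero_add x).symm, chi_zero_right,
      Pi.zero_apply, sgn_zero, one_mul]
  have hR : (∑ l, zOp j x l * pauli x z l 0) = sgn (x j) := by
    rw [Finset.sum_eq_single x (fun l _ hl => by
      rw [zOp_apply, if_neg (fun hh => hl hh.symm), zero_mul]) (by simp)]
    rw [zOp_apply, if_pos rfl, pauli_apply, if_pos (zero_add x).symm, chi_zero_right,
      mul_one]
  rw [hL, hR] at h1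
  have h2 : sgn (t + x j) = 1 := by
    rw [sgn_add]
    show sgn t * sgn (x j) = 1
    rw [show sgn t = (-1 : ℂ) ^ t.val from rfl, ← h1]
  exact zmod2_eq_of_add_eq_zero _ _ ((sgn_eq_one_iff _).mp h2)

noncomputable def ptrA {nA nB : ℕ}
    (M : Matrix ((Fin nA → ZMod 2) × (Fin nB → ZMod 2))
      ((Fin nA → ZMod 2) × (Fin nB → ZMod 2)) ℂ) :
    Matrix (Fin nB → ZMod 2) (Fin nB → ZMod 2) ℂ :=
  fun b b' => ∑ r, M (r, b) (r, b')

lemma entry_triple {nA nB : ℕ} (P Q : Matrix (Fin nA → ZMod 2) (Fin nA → ZMod 2) ℂ)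
    (Y : Matrix ((Fin nA → ZMod 2) × (Fin nB → ZMod 2))
      ((Fin nA → ZMod 2) × (Fin nB → ZMod 2)) ℂ)
    (a a' : Fin nA → ZMod 2) (b b' : Fin nB → ZMod 2) :
    ((P ⊗ₖ (1 : Matrix (Fin nB → ZMod 2) (Fin nB → ZMod 2) ℂ)) * Y *
        (Q ⊗ₖ (1 : Matrix (Fin nB → ZMod 2) (Fin nB → ZMod 2) ℂ))ᴴ) (a, b) (a', b')
      = ∑ cc : Fin nA → ZMod 2, ∑ cc' : Fin nA → ZMod 2,
          P a cc * (starRingEnd ℂ) (Q a' cc') * Y (cc, b) (cc', b') := by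
  rw [Matrix.mul_apply, Fintype.sum_prod_type]
  simp only [Matrix.mul_apply, Fintype.sum_prod_type, Matrix.conjTranspose_apply,
    Matrix.kroneckerMap_apply, Matrix.one_apply, mul_ite, mul_one, mul_zero, ite_mul,
    zero_mul, Finset.sum_ite_eq, Finset.mem_univ, if_true, star_mul', apply_ite star,
    star_one, star_zero, RCLike.star_def]
  rw [Finset.sum_comm]
  refine Finset.sum_congr rfl fun cc _ => ?_
  rw [Finset.sum_mul]
  refine Finset.sum_congr rfl fun cc' _ => ?_
  ring

-- PART 4
lemma pi_add_eq_zero_iff {n : ℕ} (a b : Fin n → ZMod 2) : a + b = 0 ↔ a = b := by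
  constructor
  · intro h
    funext i
    exact zmod2_eq_of_add_eq_zero _ _ (congrFun h i)
  · rintro rfl
    funext i
    exact CharTwo.add_self_eq_zero _

lemma pi_eq_iff' {n : ℕ} (a cc x : Fin n → ZMod 2) : a = cc + x ↔ x = a + cc := by
  constructor
  · rintro rfl
    funext i
    exact (show ∀ u v : ZMod 2, v = (u + v) + u from by decide) _ _
  · rintro rfl
    funext i
    exact (show ∀ u v : ZMod 2, u = v + (u + v) from by decide) _ _

lemma sum_comm4 {α : Type*} [Fintype α] (f : α → α → α → α → ℂ) :
    ∑ x, ∑ z, ∑ c, ∑ c', f x z c c' = ∑ c, ∑ c', ∑ x, ∑ z, f x z c c' := by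
  calc ∑ x, ∑ z, ∑ c, ∑ c', f x z c c'
      = ∑ x, ∑ c, ∑ z, ∑ c', f x z c c' := Finset.sum_congr rfl fun x _ => Finset.sum_comm
    _ = ∑ c, ∑ x, ∑ z, ∑ c', f x z c c' := Finset.sum_comm
    _ = ∑ c, ∑ x, ∑ c', ∑ z, f x z c c' := Finset.sum_congr rfl fun c _ =>
        Finset.sum_congr rfl fun x _ => Finset.sum_comm
    _ = ∑ c, ∑ c', ∑ x, ∑ z, f x z c c' := Finset.sum_congr rfl fun c _ => Finset.sum_comm

lemma twirl_key {nA : ℕ} (a a' cc cc' : Fin nA → ZMod 2) :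
    (∑ x : Fin nA → ZMod 2, ∑ z : Fin nA → ZMod 2,
        pauli x z a cc * (starRingEnd ℂ) (pauli x z a' cc'))
      = if cc = cc' ∧ a = a' then (2 : ℂ) ^ nA else 0 := by
  have hz : ∀ x, (∑ z : Fin nA → ZMod 2, pauli x z a cc * (starRingEnd ℂ) (pauli x z a' cc'))
      = if a = cc + x ∧ a' = cc' + x ∧ cc = cc' then (2 : ℂ) ^ nA else 0 := by
    intro x
    by_cases h1 : a = cc + x
    · by_cases h2 : a' = cc' + x
      · simp_rw [pauli_apply, if_pos h1, if_pos h2, conj_chi, ← chi_add_right, sum_chi]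
        rw [if_congr (pi_add_eq_zero_iff cc cc') rfl rfl]
        simp [h1, h2]
      · simp only [pauli_apply, if_neg h2, map_zero, mul_zero, Finset.sum_const_zero]
        rw [if_neg (fun h => h2 h.2.1)]
    · simp only [pauli_apply, if_neg h1, zero_mul, Finset.sum_const_zero]
      rw [if_neg (fun h => h1 h.1)]
  simp_rw [hz]
  by_cases h3 : cc = cc'
  · subst h3
    by_cases h4 : a = a'
    · subst h4
      rw [if_pos ⟨rfl, rfl⟩]
      have : ∀ x : Fin nA → ZMod 2, (a = cc + x ∧ a = cc + x ∧ cc = cc) ↔ x = a + cc := by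
        intro x
        rw [← pi_eq_iff' a cc x]
        tauto
      rw [Finset.sum_congr rfl fun x _ => if_congr (this x) rfl rfl]
      simp
    · rw [if_neg (fun h => h4 h.2)]
      refine Finset.sum_eq_zero fun x _ => ?_
      rw [if_neg (fun h => h4 (h.1.trans h.2.1.symm))]
  · rw [if_neg (fun h => h3 h.1)]
    refine Finset.sum_eq_zero fun x _ => ?_
    rw [if_neg (fun h => h3 h.2.2)]

lemma twirl {nA nB : ℕ}
    (Y : Matrix ((Fin nA → ZMod 2) × (Fin nB → ZMod 2))
      ((Fin nA → ZMod 2) × (Fin nB → ZMod 2)) ℂ)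
    (a a' : Fin nA → ZMod 2) (b b' : Fin nB → ZMod 2) :
    (∑ x : Fin nA → ZMod 2, ∑ z : Fin nA → ZMod 2,
      ((pauli x z ⊗ₖ (1 : Matrix (Fin nB → ZMod 2) (Fin nB → ZMod 2) ℂ)) * Y *
        (pauli x z ⊗ₖ (1 : Matrix (Fin nB → ZMod 2) (Fin nB → ZMod 2) ℂ))ᴴ) (a, b) (a', b'))
      = (2 : ℂ) ^ nA * (if a = a' then ptrA Y b b' else 0) := by
  simp_rw [entry_triple]
  rw [sum_comm4 (fun x z cc cc' =>
    pauli x z a cc * (starRingEnd ℂ) (pauli x z a' cc') * Y (cc, b) (cc', b'))]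
  simp_rw [← Finset.sum_mul, twirl_key, ite_mul, zero_mul, ite_and,
    Finset.sum_ite_eq, Finset.mem_univ, if_true]
  by_cases h : a = a'
  · simp [h, ptrA, Finset.mul_sum]
  · simp [h]

-- PART 5
noncomputable def eMat {nD : ℕ} (m : Fin nD → ZMod 2) :
    Matrix (Fin nD → ZMod 2) (Fin nD → ZMod 2) ℂ :=
  Matrix.of fun d d' => if d = m ∧ d' = m then 1 else 0

noncomputable def EMat (nC : ℕ) {nD : ℕ} (m : Fin nD → ZMod 2) :
    Matrix ((Fin nC → ZMod 2) × (Fin nD → ZMod 2))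
      ((Fin nC → ZMod 2) × (Fin nD → ZMod 2)) ℂ :=
  (1 : Matrix (Fin nC → ZMod 2) (Fin nC → ZMod 2) ℂ) ⊗ₖ eMat m

lemma kron_conjTranspose {l m n p : Type*} (A : Matrix l m ℂ) (B : Matrix n p ℂ) :
    (A ⊗ₖ B)ᴴ = Aᴴ ⊗ₖ Bᴴ := by
  ext ⟨i, j⟩ ⟨k, l'⟩
  simp only [Matrix.conjTranspose_apply, Matrix.kroneckerMap_apply, star_mul']

lemma eMat_mul_apply {nD : ℕ} (m : Fin nD → ZMod 2)
    (M : Matrix (Fin nD → ZMod 2) (Fin nD → ZMod 2) ℂ) (d d' : Fin nD → ZMod 2) :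
    (eMat m * M) d d' = if d = m then M m d' else 0 := by
  rw [Matrix.mul_apply]
  by_cases h : d = m
  · subst h
    rw [if_pos rfl, Finset.sum_eq_single d (fun k _ hk => by
      simp [eMat, hk]) (by simp)]
    simp [eMat]
  · rw [if_neg h]
    refine Finset.sum_eq_zero fun k _ => ?_
    simp [eMat, h]

lemma eTrace {nD : ℕ} (xdv zdv m mb : Fin nD → ZMod 2) :
    Matrix.trace (eMat m * (pauli xdv zdv * (eMat mb * (pauli xdv zdv)ᴴ)))
      = if xdv = m + mb then 1 else 0 := by
  rw [Matrix.trace]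
  rw [Finset.sum_eq_single m (fun d _ hd => by
    rw [Matrix.diag_apply, eMat_mul_apply, if_neg hd]) (by simp)]
  rw [Matrix.diag_apply, eMat_mul_apply, if_pos rfl, Matrix.mul_apply]
  rw [Finset.sum_eq_single mb (fun k _ hk => by
    rw [eMat_mul_apply, if_neg hk, mul_zero]) (by simp)]
  rw [eMat_mul_apply, if_pos rfl, Matrix.conjTranspose_apply, pauli_apply]
  rw [if_congr (pi_eq_iff' m mb xdv) rfl rfl]
  by_cases h : xdv = m + mb
  · rw [if_pos h, if_pos h, RCLike.star_def, conj_chi, chi_mul_self]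
  · rw [if_neg h, if_neg h, star_zero, mul_zero]

-- PART 6
lemma card_fun2 (n : ℕ) : Fintype.card (Fin n → ZMod 2) = 2 ^ n := by
  simp [Fintype.card_fun]

lemma cliffordTrace {nA nB nC nD : ℕ}
    (U : Matrix ((Fin nC → ZMod 2) × (Fin nD → ZMod 2))
      ((Fin nA → ZMod 2) × (Fin nB → ZMod 2)) ℂ)
    (hU1 : U * Uᴴ = 1) (hU2 : Uᴴ * U = 1)
    (c0 : ℂ) (hc : ‖c0‖ = 1)
    (xcv zcv : Fin nC → ZMod 2) (xdv zdv : Fin nD → ZMod 2)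
    (x z : Fin nA → ZMod 2)
    (hcl : U * (pauli x z ⊗ₖ (1 : Matrix (Fin nB → ZMod 2) (Fin nB → ZMod 2) ℂ)) * Uᴴ
      = c0 • (pauli xcv zcv ⊗ₖ pauli xdv zdv))
    (m mb : Fin nD → ZMod 2) :
    Matrix.trace ((Uᴴ * EMat nC m * U) *
        ((pauli x z ⊗ₖ (1 : Matrix (Fin nB → ZMod 2) (Fin nB → ZMod 2) ℂ)) *
          ((Uᴴ * EMat nC mb * U) *
            (pauli x z ⊗ₖ (1 : Matrix (Fin nB → ZMod 2) (Fin nB → ZMod 2) ℂ))ᴴ)))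
      = (2 : ℂ) ^ nC * (if xdv = m + mb then 1 else 0) := by
  have hcanc : ∀ {κ : Type} (M : Matrix ((Fin nC → ZMod 2) × (Fin nD → ZMod 2)) κ ℂ),
      U * (Uᴴ * M) = M := by
    intro κ M
    rw [← Matrix.mul_assoc, hU1, Matrix.one_mul]
  set P : Matrix ((Fin nA → ZMod 2) × (Fin nB → ZMod 2))
      ((Fin nA → ZMod 2) × (Fin nB → ZMod 2)) ℂ :=
    pauli x z ⊗ₖ (1 : Matrix (Fin nB → ZMod 2) (Fin nB → ZMod 2) ℂ) with hPdef
  set Q : Matrix ((Fin nC → ZMod 2) × (Fin nD → ZMod 2))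
      ((Fin nC → ZMod 2) × (Fin nD → ZMod 2)) ℂ :=
    pauli xcv zcv ⊗ₖ pauli xdv zdv with hQdef
  have hP2 : P = Uᴴ * ((c0 • Q) * U) := by
    rw [← hcl]
    simp only [Matrix.mul_assoc, hcanc]
    rw [hU2, Matrix.mul_one, ← Matrix.mul_assoc, hU2, Matrix.one_mul]
  have hPH2 : Pᴴ = Uᴴ * (((starRingEnd ℂ) c0 • Qᴴ) * U) := by
    have h := congrArg Matrix.conjTranspose hcl
    simp only [Matrix.conjTranspose_mul, Matrix.conjTranspose_conjTranspose,
      Matrix.conjTranspose_smul] at h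
    calc Pᴴ = (Uᴴ * U) * Pᴴ * (Uᴴ * U) := by rw [hU2, Matrix.one_mul, Matrix.mul_one]
      _ = Uᴴ * ((U * P * Uᴴ)ᴴ * U) := by
          simp only [Matrix.conjTranspose_mul, Matrix.conjTranspose_conjTranspose,
            Matrix.mul_assoc]
      _ = Uᴴ * (((starRingEnd ℂ) c0 • Qᴴ) * U) := by
          rw [hcl, Matrix.conjTranspose_smul]
          rfl
  rw [hPH2, hP2]
  simp only [Matrix.mul_assoc, hcanc]
  rw [Matrix.trace_mul_comm]
  simp only [Matrix.mul_assoc]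
  rw [hU1, Matrix.mul_one]
  simp only [Matrix.smul_mul, Matrix.mul_smul, Matrix.trace_smul, smul_smul, smul_eq_mul]
  have hcc : c0 * (starRingEnd ℂ) c0 = 1 := by
    rw [Complex.mul_conj, Complex.normSq_eq_norm_sq, hc]
    norm_num
  rw [mul_comm ((starRingEnd ℂ) c0) c0, hcc, one_mul, hQdef]
  show Matrix.trace (EMat nC m * ((pauli xcv zcv ⊗ₖ pauli xdv zdv) *
    (EMat nC mb * (pauli xcv zcv ⊗ₖ pauli xdv zdv)ᴴ))) = _
  rw [kron_conjTranspose]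
  simp only [EMat, ← Matrix.mul_kronecker_mul]
  rw [Matrix.trace_kronecker]
  simp only [Matrix.one_mul]
  rw [pauli_mul_conjTranspose_self, Matrix.trace_one, card_fun2, eTrace]
  push_cast
  ring

-- PART 7
lemma sum_comm4' {α β γ δ : Type*} [Fintype α] [Fintype β] [Fintype γ] [Fintype δ]
    (f : α → β → γ → δ → ℂ) :
    ∑ x, ∑ z, ∑ c, ∑ c', f x z c c' = ∑ c, ∑ c', ∑ x, ∑ z, f x z c c' := by
  calc ∑ x, ∑ z, ∑ c, ∑ c', f x z c c'
      = ∑ x, ∑ c, ∑ z, ∑ c', f x z c c' := Finset.sum_congr rfl fun x _ => Finset.sum_comm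
    _ = ∑ c, ∑ x, ∑ z, ∑ c', f x z c c' := Finset.sum_comm
    _ = ∑ c, ∑ x, ∑ c', ∑ z, f x z c c' := Finset.sum_congr rfl fun c _ =>
        Finset.sum_congr rfl fun x _ => Finset.sum_comm
    _ = ∑ c, ∑ c', ∑ x, ∑ z, f x z c c' := Finset.sum_congr rfl fun c _ => Finset.sum_comm

lemma X_apply {nA nB nC nD : ℕ}
    (U : Matrix ((Fin nC → ZMod 2) × (Fin nD → ZMod 2))
      ((Fin nA → ZMod 2) × (Fin nB → ZMod 2)) ℂ)
    (m : Fin nD → ZMod 2) (p q : (Fin nA → ZMod 2) × (Fin nB → ZMod 2)) :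
    (Uᴴ * EMat nC m * U) p q
      = ∑ cc : Fin nC → ZMod 2, (starRingEnd ℂ) (U (cc, m) p) * U (cc, m) q := by
  rw [Matrix.mul_apply, Fintype.sum_prod_type]
  simp only [Matrix.mul_apply, Matrix.conjTranspose_apply, EMat, eMat,
    Matrix.kroneckerMap_apply, Matrix.one_apply, Matrix.of_apply, Fintype.sum_prod_type,
    mul_ite, mul_one, mul_zero, ite_mul, zero_mul, one_mul, ite_and,
    Finset.sum_ite_eq, Finset.sum_ite_eq', Finset.mem_univ, if_true,
    Finset.sum_ite_irrel, Finset.sum_const_zero, RCLike.star_def]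

lemma traceB {nA nB : ℕ}
    (X : Matrix ((Fin nA → ZMod 2) × (Fin nB → ZMod 2))
      ((Fin nA → ZMod 2) × (Fin nB → ZMod 2)) ℂ)
    (N : Matrix (Fin nB → ZMod 2) (Fin nB → ZMod 2) ℂ) :
    Matrix.trace (X * ((1 : Matrix (Fin nA → ZMod 2) (Fin nA → ZMod 2) ℂ) ⊗ₖ N))
      = ∑ b : Fin nB → ZMod 2, ∑ b' : Fin nB → ZMod 2, (ptrA X) b b' * N b' b := by
  rw [Matrix.trace, Fintype.sum_prod_type]
  simp only [Matrix.diag_apply, Matrix.mul_apply, Fintype.sum_prod_type,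
    Matrix.kroneckerMap_apply, Matrix.one_apply, mul_ite, mul_one, mul_zero, ite_mul,
    zero_mul]
  have step1 : ∀ (a : Fin nA → ZMod 2) (b : Fin nB → ZMod 2),
      (∑ a2 : Fin nA → ZMod 2, ∑ b3 : Fin nB → ZMod 2,
        if a2 = a then X (a, b) (a2, b3) * (1 * N b3 b) else 0)
      = ∑ b3 : Fin nB → ZMod 2, X (a, b) (a, b3) * N b3 b := by
    intro a b
    rw [Finset.sum_comm]
    simp only [Finset.sum_ite_eq', Finset.mem_univ, if_true, one_mul]
  simp_rw [step1]
  rw [Finset.sum_comm]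
  simp_rw [ptrA, Finset.sum_mul]
  exact Finset.sum_congr rfl fun b _ => Finset.sum_comm

lemma twirlM {nA nB : ℕ}
    (Y : Matrix ((Fin nA → ZMod 2) × (Fin nB → ZMod 2))
      ((Fin nA → ZMod 2) × (Fin nB → ZMod 2)) ℂ) :
    (∑ x : Fin nA → ZMod 2, ∑ z : Fin nA → ZMod 2,
      (pauli x z ⊗ₖ (1 : Matrix (Fin nB → ZMod 2) (Fin nB → ZMod 2) ℂ)) *
        (Y * (pauli x z ⊗ₖ (1 : Matrix (Fin nB → ZMod 2) (Fin nB → ZMod 2) ℂ))ᴴ))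
      = ((2 : ℂ) ^ nA) • ((1 : Matrix (Fin nA → ZMod 2) (Fin nA → ZMod 2) ℂ) ⊗ₖ ptrA Y) := by
  ext ⟨a, b⟩ ⟨a', b'⟩
  have h := twirl Y a a' b b'
  simp only [← Matrix.mul_assoc] at *
  simp only [Matrix.sum_apply]
  rw [h]
  simp only [Matrix.smul_apply, Matrix.kroneckerMap_apply, Matrix.one_apply,
    smul_eq_mul, ite_mul, one_mul, zero_mul, mul_ite, mul_zero]

-- PART 8
lemma bigFactor {nA nB nC nD : ℕ}
    (U : Matrix ((Fin nC → ZMod 2) × (Fin nD → ZMod 2))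
      ((Fin nA → ZMod 2) × (Fin nB → ZMod 2)) ℂ)
    (m mb : Fin nD → ZMod 2) :
    (∑ r : Fin nA → ZMod 2, ∑ cc : Fin nC → ZMod 2, ∑ cb : Fin nC → ZMod 2,
      ∑ rb : Fin nA → ZMod 2,
        (∑ b : Fin nB → ZMod 2, U (cc, m) (r, b) * (starRingEnd ℂ) (U (cb, mb) (rb, b))) *
          (starRingEnd ℂ)
            (∑ b : Fin nB → ZMod 2, U (cc, m) (r, b) * (starRingEnd ℂ) (U (cb, mb) (rb, b))))
      = ∑ b : Fin nB → ZMod 2, ∑ b' : Fin nB → ZMod 2,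
          ptrA (Uᴴ * EMat nC m * U) b b' * ptrA (Uᴴ * EMat nC mb * U) b' b := by
  have step1 : ∀ (r rb : Fin nA → ZMod 2) (cc cb : Fin nC → ZMod 2),
      ((∑ b : Fin nB → ZMod 2, U (cc, m) (r, b) * (starRingEnd ℂ) (U (cb, mb) (rb, b))) *
        (starRingEnd ℂ)
          (∑ b : Fin nB → ZMod 2, U (cc, m) (r, b) * (starRingEnd ℂ) (U (cb, mb) (rb, b))))
      = ∑ b : Fin nB → ZMod 2, ∑ b' : Fin nB → ZMod 2,
          (U (cc, m) (r, b) * (starRingEnd ℂ) (U (cc, m) (r, b'))) *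
            ((starRingEnd ℂ) (U (cb, mb) (rb, b)) * U (cb, mb) (rb, b')) := by
    intro r rb cc cb
    rw [map_sum, Finset.sum_mul_sum]
    refine Finset.sum_congr rfl fun b _ => Finset.sum_congr rfl fun b' _ => ?_
    rw [_root_.map_mul, Complex.conj_conj]
    ring
  simp_rw [step1]
  have step2 : ∀ (r : Fin nA → ZMod 2) (cc : Fin nC → ZMod 2),
      (∑ cb : Fin nC → ZMod 2, ∑ rb : Fin nA → ZMod 2, ∑ b : Fin nB → ZMod 2,
        ∑ b' : Fin nB → ZMod 2,
          (U (cc, m) (r, b) * (starRingEnd ℂ) (U (cc, m) (r, b'))) *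
            ((starRingEnd ℂ) (U (cb, mb) (rb, b)) * U (cb, mb) (rb, b')))
      = ∑ b : Fin nB → ZMod 2, ∑ b' : Fin nB → ZMod 2,
          (U (cc, m) (r, b) * (starRingEnd ℂ) (U (cc, m) (r, b'))) *
            (∑ rb : Fin nA → ZMod 2, ∑ cb : Fin nC → ZMod 2,
              (starRingEnd ℂ) (U (cb, mb) (rb, b)) * U (cb, mb) (rb, b')) := by
    intro r cc
    rw [sum_comm4' (fun cb rb b b' => (U (cc, m) (r, b) * (starRingEnd ℂ) (U (cc, m) (r, b'))) *
      ((starRingEnd ℂ) (U (cb, mb) (rb, b)) * U (cb, mb) (rb, b')))]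
    refine Finset.sum_congr rfl fun b _ => Finset.sum_congr rfl fun b' _ => ?_
    simp_rw [← Finset.mul_sum]
    congr 1
    exact Finset.sum_comm
  simp_rw [step2]
  rw [sum_comm4' (fun r cc b b' => (U (cc, m) (r, b) * (starRingEnd ℂ) (U (cc, m) (r, b'))) *
    (∑ rb : Fin nA → ZMod 2, ∑ cb : Fin nC → ZMod 2,
      (starRingEnd ℂ) (U (cb, mb) (rb, b)) * U (cb, mb) (rb, b')))]
  rw [Finset.sum_comm]
  refine Finset.sum_congr rfl fun b _ => Finset.sum_congr rfl fun b' _ => ?_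
  simp_rw [← Finset.sum_mul]
  have e1 : ptrA (Uᴴ * EMat nC m * U) b b' = ∑ r : Fin nA → ZMod 2,
      ∑ cc : Fin nC → ZMod 2, (starRingEnd ℂ) (U (cc, m) (r, b)) * U (cc, m) (r, b') := by
    simp_rw [ptrA, X_apply]
  have e2 : ptrA (Uᴴ * EMat nC mb * U) b' b = ∑ rb : Fin nA → ZMod 2,
      ∑ cb : Fin nC → ZMod 2, (starRingEnd ℂ) (U (cb, mb) (rb, b')) * U (cb, mb) (rb, b) := by
    simp_rw [ptrA, X_apply]
  rw [e1, e2]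
  congr 1
  exact Finset.sum_congr rfl fun r _ => Finset.sum_congr rfl fun cc _ => mul_comm _ _

/-- With local Pauli-`Z` measurements on `D` and `D̄`, the probability of
outcome strings `m`, `m̄` equals `(1/d_D)(1/d_A²) N_s` with `s = m + m̄`
and `N_s = #{P_A : Λ_Z(P_A) = s}`. -/
theorem stmt17 (nA nB nC nD : ℕ)
    (U : Matrix ((Fin nC → ZMod 2) × (Fin nD → ZMod 2))
      ((Fin nA → ZMod 2) × (Fin nB → ZMod 2)) ℂ)
    (hU1 : U * Uᴴ = 1) (hU2 : Uᴴ * U = 1)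
    (c : (Fin nA → ZMod 2) → (Fin nA → ZMod 2) → ℂ)
    (xc zc : (Fin nA → ZMod 2) → (Fin nA → ZMod 2) → (Fin nC → ZMod 2))
    (xd zd : (Fin nA → ZMod 2) → (Fin nA → ZMod 2) → (Fin nD → ZMod 2))
    (hClif : ∀ x z : Fin nA → ZMod 2, ‖c x z‖ = 1 ∧
      U * (pauli x z ⊗ₖ (1 : Matrix (Fin nB → ZMod 2) (Fin nB → ZMod 2) ℂ)) * Uᴴ
        = c x z • (pauli (xc x z) (zc x z) ⊗ₖ pauli (xd x z) (zd x z)))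
    (s : (Fin nA → ZMod 2) → (Fin nA → ZMod 2) → (Fin nD → ZMod 2))
    (hs : ∀ (x z : Fin nA → ZMod 2) (j : Fin nD),
      pauli (xd x z) (zd x z) * zOp j
        = ((-1 : ℂ)) ^ ((s x z j).val) • (zOp j * pauli (xd x z) (zd x z)))
    (m mb : Fin nD → ZMod 2) :
    (∑ r : Fin nA → ZMod 2, ∑ cc : Fin nC → ZMod 2,
      ∑ cb : Fin nC → ZMod 2, ∑ rb : Fin nA → ZMod 2,
        Complex.normSq (psiYK nA nB nC nD U r (cc, m) (mb, cb) rb))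
      = (Fintype.card {PA : (Fin nA → ZMod 2) × (Fin nA → ZMod 2) //
            s PA.1 PA.2 = m + mb} : ℝ) / (2 ^ nD * (2 ^ nA) ^ 2) := by
  have hsxd : ∀ x z : Fin nA → ZMod 2, s x z = xd x z := fun x z =>
    funext fun j => comm_extract (xd x z) (zd x z) j (s x z j) (hs x z j)
  have hdim : ((2 : ℂ) ^ nC) * (2 : ℂ) ^ nD = (2 : ℂ) ^ nA * (2 : ℂ) ^ nB := by
    have h := Matrix.trace_mul_comm U Uᴴ
    rw [hU1, hU2, Matrix.trace_one, Matrix.trace_one] at h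
    simp only [Fintype.card_prod, card_fun2] at h
    exact_mod_cast h
  have hN : ((Fintype.card {PA : (Fin nA → ZMod 2) × (Fin nA → ZMod 2) //
        s PA.1 PA.2 = m + mb} : ℕ) : ℂ)
      = ∑ x : Fin nA → ZMod 2, ∑ z : Fin nA → ZMod 2,
          (if xd x z = m + mb then (1 : ℂ) else 0) := by
    rw [Fintype.card_subtype, Finset.card_filter]
    push_cast
    rw [Fintype.sum_prod_type]
    exact Finset.sum_congr rfl fun x _ => Finset.sum_congr rfl fun z _ => by
      rw [hsxd]
  have hQ : ∀ x z : Fin nA → ZMod 2,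
      Matrix.trace ((Uᴴ * EMat nC m * U) *
        ((pauli x z ⊗ₖ (1 : Matrix (Fin nB → ZMod 2) (Fin nB → ZMod 2) ℂ)) *
          ((Uᴴ * EMat nC mb * U) *
            (pauli x z ⊗ₖ (1 : Matrix (Fin nB → ZMod 2) (Fin nB → ZMod 2) ℂ))ᴴ)))
      = (2 : ℂ) ^ nC * (if xd x z = m + mb then 1 else 0) := fun x z =>
    cliffordTrace U hU1 hU2 (c x z) (hClif x z).1 _ _ _ _ x z (hClif x z).2 m mb
  have t1 : (2 : ℂ) ^ nA * (∑ b : Fin nB → ZMod 2, ∑ b' : Fin nB → ZMod 2,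
        ptrA (Uᴴ * EMat nC m * U) b b' * ptrA (Uᴴ * EMat nC mb * U) b' b)
      = (2 : ℂ) ^ nC *
        ((Fintype.card {PA : (Fin nA → ZMod 2) × (Fin nA → ZMod 2) //
          s PA.1 PA.2 = m + mb} : ℕ) : ℂ) := by
    rw [← traceB (Uᴴ * EMat nC m * U) (ptrA (Uᴴ * EMat nC mb * U))]
    calc (2 : ℂ) ^ nA * Matrix.trace ((Uᴴ * EMat nC m * U) *
          ((1 : Matrix (Fin nA → ZMod 2) (Fin nA → ZMod 2) ℂ) ⊗ₖ
            ptrA (Uᴴ * EMat nC mb * U)))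
        = Matrix.trace ((Uᴴ * EMat nC m * U) * (((2 : ℂ) ^ nA) •
            ((1 : Matrix (Fin nA → ZMod 2) (Fin nA → ZMod 2) ℂ) ⊗ₖ
              ptrA (Uᴴ * EMat nC mb * U)))) := by
          rw [Matrix.mul_smul, Matrix.trace_smul, smul_eq_mul]
      _ = Matrix.trace ((Uᴴ * EMat nC m * U) *
            (∑ x : Fin nA → ZMod 2, ∑ z : Fin nA → ZMod 2,
              (pauli x z ⊗ₖ (1 : Matrix (Fin nB → ZMod 2) (Fin nB → ZMod 2) ℂ)) *
                ((Uᴴ * EMat nC mb * U) *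
                  (pauli x z ⊗ₖ (1 : Matrix (Fin nB → ZMod 2) (Fin nB → ZMod 2) ℂ))ᴴ))) := by
          rw [twirlM]
      _ = ∑ x : Fin nA → ZMod 2, ∑ z : Fin nA → ZMod 2,
            Matrix.trace ((Uᴴ * EMat nC m * U) *
              ((pauli x z ⊗ₖ (1 : Matrix (Fin nB → ZMod 2) (Fin nB → ZMod 2) ℂ)) *
                ((Uᴴ * EMat nC mb * U) *
                  (pauli x z ⊗ₖ (1 : Matrix (Fin nB → ZMod 2) (Fin nB → ZMod 2) ℂ))ᴴ))) := by
          simp_rw [Matrix.mul_sum, Matrix.trace_sum]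
      _ = ∑ x : Fin nA → ZMod 2, ∑ z : Fin nA → ZMod 2,
            (2 : ℂ) ^ nC * (if xd x z = m + mb then 1 else 0) := by
          simp_rw [hQ]
      _ = _ := by rw [hN]; simp_rw [← Finset.mul_sum]
  -- scalar prefactor
  have hs2 : ((Real.sqrt (2 ^ nB) : ℝ) : ℂ) * ((Real.sqrt (2 ^ nB) : ℝ) : ℂ)
      = (2 : ℂ) ^ nB := by
    rw [← Complex.ofReal_mul, Real.mul_self_sqrt (by positivity)]
    push_cast
    ring
  have hk : (((2 ^ nA : ℂ) * (Real.sqrt (2 ^ nB) : ℂ))⁻¹) *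
      (starRingEnd ℂ) (((2 ^ nA : ℂ) * (Real.sqrt (2 ^ nB) : ℂ))⁻¹)
      = ((2 : ℂ) ^ nA * (2 : ℂ) ^ nA * (2 : ℂ) ^ nB)⁻¹ := by
    rw [map_inv₀, _root_.map_mul, Complex.conj_ofReal, ← mul_inv]
    congr 1
    rw [show (starRingEnd ℂ) (2 ^ nA : ℂ) = (2 : ℂ) ^ nA by
      rw [map_pow, map_ofNat]]
    calc (2 ^ nA : ℂ) * (Real.sqrt (2 ^ nB) : ℂ) *
          ((2 : ℂ) ^ nA * (Real.sqrt (2 ^ nB) : ℂ))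
        = (2 : ℂ) ^ nA * (2 : ℂ) ^ nA *
            ((Real.sqrt (2 ^ nB) : ℂ) * (Real.sqrt (2 ^ nB) : ℂ)) := by ring
      _ = _ := by rw [hs2]
  rw [← Complex.ofReal_inj]
  push_cast
  simp_rw [← Complex.mul_conj, psiYK, _root_.map_mul, mul_mul_mul_comm, hk,
    ← Finset.mul_sum]
  rw [bigFactor U m mb]
  have h2A : (2 : ℂ) ^ nA ≠ 0 := pow_ne_zero _ two_ne_zero
  have h2B : (2 : ℂ) ^ nB ≠ 0 := pow_ne_zero _ two_ne_zero
  have h2D : (2 : ℂ) ^ nD ≠ 0 := pow_ne_zero _ two_ne_zero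
  field_simp
  apply mul_left_cancel₀ h2A
  linear_combination ((2 : ℂ) ^ nD) * t1 +
    ((Fintype.card {PA : (Fin nA → ZMod 2) × (Fin nA → ZMod 2) //
      s PA.1 PA.2 = m + mb} : ℂ)) * hdim
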